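/- arXiv:2207.01632 — 2 statements merged into one kernel-verified Lean document; each statement's English description precedes it below -/
import Mathlib

section
/- For every m ≥ 0, Conv(∇_m ∪ ∇_{m+1}) = Conv((1,0), (0,1), (-1,0), (-m,-1), (-(m+1),-1)), and there are reductions Conv(∇_m ∪ ∇_{m+1}) ⊃ ∇_m and Conv(∇_m ∪ ∇_{m+1}) ⊃ ∇_{m+1} each removing exactly one primitive lattice point. -/
open Set

/-- A lattice point of `ℤ^d ⊆ ℝ^d`. -/
def IsLatticePoint {d : ℕ} (x : Fin d → ℝ) : Prop := ∀ i, ∃ n : ℤ, x i = (n : ℝ)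

/-- A lattice polytope: the convex hull of finitely many lattice points. -/
def IsLatticePolytope {d : ℕ} (P : Set (Fin d → ℝ)) : Prop :=
  ∃ S : Finset (Fin d → ℝ), (∀ x ∈ S, IsLatticePoint x) ∧ P = convexHull ℝ (S : Set (Fin d → ℝ))

/-- The polar dual `P* = {u | ⟨u,v⟩ ≥ -1 for all v ∈ P}`. -/
def polarDual {d : ℕ} (P : Set (Fin d → ℝ)) : Set (Fin d → ℝ) :=
  {u | ∀ v ∈ P, (-1 : ℝ) ≤ ∑ i, u i * v i}

/-- `[P]`: the convex hull of the lattice points of `P`. -/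
def latticeHull {d : ℕ} (P : Set (Fin d → ℝ)) : Set (Fin d → ℝ) :=
  convexHull ℝ {x ∈ P | IsLatticePoint x}

/-- A primitive lattice point. -/
def IsPrimitivePt {d : ℕ} (x : Fin d → ℝ) : Prop :=
  IsLatticePoint x ∧ x ≠ 0 ∧
    ∀ (n : ℕ) (u : Fin d → ℝ), IsLatticePoint u → x = n • u → n = 1

/-- A Fano polytope: a lattice polytope with the origin as interior point,
all of whose vertices are primitive lattice points. -/
def IsFanoPolytope {d : ℕ} (P : Set (Fin d → ℝ)) : Prop :=
  IsLatticePolytope P ∧ 0 ∈ interior P ∧ ∀ v ∈ Set.extremePoints ℝ P, IsPrimitivePt v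

/-- Canonical: the origin is the unique interior lattice point. -/
def IsCanonical {d : ℕ} (P : Set (Fin d → ℝ)) : Prop :=
  ∀ x ∈ interior P, IsLatticePoint x → x = 0

/-- Terminal: the lattice points are exactly the vertices together with the origin. -/
def IsTerminal {d : ℕ} (P : Set (Fin d → ℝ)) : Prop :=
  {x ∈ P | IsLatticePoint x} = Set.extremePoints ℝ P ∪ {0}

/-- The Fano polygon `∇_{-∞} = Conv(e₁, e₂, -e₁-e₂)`, corresponding to `ℙ²`. -/
def nablaInf : Set (Fin 2 → ℝ) :=
  convexHull ℝ ({![1,0], ![0,1], ![-1,-1]} : Set (Fin 2 → ℝ))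

/-- The Fano polygon `∇_m = Conv(e₁, e₂, -e₁, -m·e₁-e₂)`, corresponding to `𝔽_m`. -/
def nabla (m : ℕ) : Set (Fin 2 → ℝ) :=
  convexHull ℝ ({![1,0], ![0,1], ![-1,0], ![-(m:ℝ),-1]} : Set (Fin 2 → ℝ))

/-- The polygon `Conv(∇_m ∪ ∇_{m+1})` in explicit vertex form. -/
def nablaUnion (m : ℕ) : Set (Fin 2 → ℝ) :=
  convexHull ℝ
    ({![1,0], ![0,1], ![-1,0], ![-(m:ℝ),-1], ![-((m:ℝ)+1),-1]} : Set (Fin 2 → ℝ))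

lemma vec_ne {a b c d : ℝ} (h : a ≠ c ∨ b ≠ d) : (![a,b] : Fin 2 → ℝ) ≠ ![c,d] := by
  rcases h with h | h <;> intro he
  · have := congrFun he 0; simp at this; exact h this
  · have := congrFun he 1; simp at this; exact h this

lemma ncard4 (t : ℝ) : ({![1,0], ![0,1], ![-1,0], ![t,-1]} : Set (Fin 2 → ℝ)).ncard = 4 := by
  rw [Set.ncard_insert_of_notMem ?h1 (Set.toFinite _),
      Set.ncard_insert_of_notMem ?h2 (Set.toFinite _),
      Set.ncard_insert_of_notMem ?h3 (Set.toFinite _),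
      Set.ncard_singleton]
  case h1 =>
    simp only [Set.mem_insert_iff, Set.mem_singleton_iff]; push_neg
    exact ⟨vec_ne (Or.inl (by norm_num)), vec_ne (Or.inl (by norm_num)),
      vec_ne (Or.inr (by norm_num))⟩
  case h2 =>
    simp only [Set.mem_insert_iff, Set.mem_singleton_iff]; push_neg
    exact ⟨vec_ne (Or.inl (by norm_num)), vec_ne (Or.inr (by norm_num))⟩
  case h3 =>
    simp only [Set.mem_singleton_iff]
    exact vec_ne (Or.inr (by norm_num))

lemma ncard5 (s t : ℝ) (hst : s ≠ t) :
    ({![1,0], ![0,1], ![-1,0], ![s,-1], ![t,-1]} : Set (Fin 2 → ℝ)).ncard = 5 := by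
  rw [Set.ncard_insert_of_notMem ?h1 (Set.toFinite _),
      Set.ncard_insert_of_notMem ?h2 (Set.toFinite _),
      Set.ncard_insert_of_notMem ?h3 (Set.toFinite _),
      Set.ncard_insert_of_notMem ?h4 (Set.toFinite _),
      Set.ncard_singleton]
  case h1 =>
    simp only [Set.mem_insert_iff, Set.mem_singleton_iff]; push_neg
    exact ⟨vec_ne (Or.inl (by norm_num)), vec_ne (Or.inl (by norm_num)),
      vec_ne (Or.inr (by norm_num)), vec_ne (Or.inr (by norm_num))⟩
  case h2 =>
    simp only [Set.mem_insert_iff, Set.mem_singleton_iff]; push_neg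
    exact ⟨vec_ne (Or.inl (by norm_num)), vec_ne (Or.inr (by norm_num)),
      vec_ne (Or.inr (by norm_num))⟩
  case h3 =>
    simp only [Set.mem_insert_iff, Set.mem_singleton_iff]; push_neg
    exact ⟨vec_ne (Or.inr (by norm_num)), vec_ne (Or.inr (by norm_num))⟩
  case h4 =>
    simp only [Set.mem_singleton_iff]
    exact vec_ne (Or.inl hst)

lemma hull_le {S : Set (Fin 2 → ℝ)} {a b c : ℝ}
    (h : ∀ v ∈ S, a * v 0 + b * v 1 ≤ c) {x} (hx : x ∈ convexHull ℝ S) :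
    a * x 0 + b * x 1 ≤ c := by
  have hconv : Convex ℝ {p : Fin 2 → ℝ | a * p 0 + b * p 1 ≤ c} := by
    refine convex_halfSpace_le ⟨?_, ?_⟩ c
    · intro p q; simp [Pi.add_apply]; ring
    · intro t p; simp [Pi.smul_apply, smul_eq_mul]; ring
  exact convexHull_min h hconv hx
lemma eq_vec {x : Fin 2 → ℝ} {a b : ℝ} (h0 : x 0 = a) (h1 : x 1 = b) : x = ![a,b] := by
  funext i; fin_cases i <;> simp [h0, h1]
lemma lat_vec {a b : ℝ} (ha : ∃ n : ℤ, a = n) (hb : ∃ n : ℤ, b = n) :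
    IsLatticePoint (![a,b] : Fin 2 → ℝ) := by
  intro i; fin_cases i
  · simpa using ha
  · simpa using hb
lemma prim_of_coord {x : Fin 2 → ℝ} (hl : IsLatticePoint x) (i : Fin 2)
    (h : x i = 1 ∨ x i = -1) : IsPrimitivePt x := by
  refine ⟨hl, ?_, ?_⟩
  · intro h0
    rcases h with h | h <;> rw [h0] at h <;> simp at h
  · intro n u hu hx
    obtain ⟨k, hk⟩ := hu i
    have hxi : x i = (n : ℝ) * (k : ℝ) := by
      rw [hx]; simp [Pi.smul_apply, hk]
    have hd : (n : ℤ) ∣ 1 := by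
      rcases h with h | h
      · rw [hxi] at h
        have h2 : (n : ℤ) * k = 1 := by exact_mod_cast h
        exact ⟨k, h2.symm⟩
      · rw [hxi] at h
        have h2 : (n : ℤ) * k = -1 := by exact_mod_cast h
        exact ⟨-k, by linarith⟩
    have : n ∣ 1 := by exact_mod_cast hd
    exact Nat.dvd_one.mp this

lemma prim_nabla (m : ℕ) :
    {x ∈ nabla m | IsPrimitivePt x}
      = ({![1,0], ![0,1], ![-1,0], ![-(m:ℝ),-1]} : Set (Fin 2 → ℝ)) := by
  have hm : (0:ℝ) ≤ (m:ℝ) := Nat.cast_nonneg m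
  ext x
  simp only [Set.mem_setOf_eq, Set.mem_insert_iff, Set.mem_singleton_iff]
  constructor
  · rintro ⟨hx, hprim⟩
    rw [nabla] at hx
    obtain ⟨p, hp⟩ := hprim.1 0
    obtain ⟨q, hq⟩ := hprim.1 1
    have gen : ∀ (a b c : ℝ),
        a * 1 + b * 0 ≤ c → a * 0 + b * 1 ≤ c → a * (-1) + b * 0 ≤ c →
        a * (-(m:ℝ)) + b * (-1) ≤ c → a * x 0 + b * x 1 ≤ c := by
      intro a b c h1 h2 h3 h4
      refine hull_le ?_ hx
      intro v hv
      simp only [Set.mem_insert_iff, Set.mem_singleton_iff] at hv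
      rcases hv with rfl | rfl | rfl | rfl <;>
        simp only [Matrix.cons_val_zero, Matrix.cons_val_one, Matrix.head_cons] <;> linarith
    have I1 := gen 0 1 1 (by norm_num) (by norm_num) (by norm_num) (by norm_num)
    have I2 := gen 0 (-1) 1 (by norm_num) (by norm_num) (by norm_num) (by norm_num)
    have I3 := gen 1 1 1 (by norm_num) (by norm_num) (by norm_num) (by linarith)
    have I4 := gen (-1) ((m+2)/2) ((m+2)/2) (by linarith) (by linarith) (by linarith) (by linarith)
    have I5 := gen 1 (-((m:ℝ)+1)) 1 (by norm_num) (by linarith) (by norm_num) (by ring_nf; linarith)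
    have I6 := gen (-1) (((m:ℝ)-2)/2) (((m:ℝ)+2)/2) (by linarith) (by linarith) (by linarith) (by ring_nf; linarith)
    rw [hp, hq] at I1 I2 I3 I4 I5 I6
    have hq1 : q ≤ 1 := by exact_mod_cast (by linarith : (q:ℝ) ≤ 1)
    have hq2 : -1 ≤ q := by exact_mod_cast (by linarith : (-1:ℝ) ≤ (q:ℝ))
    interval_cases q
    · -- q = -1
      have e1 : (p:ℝ) ≤ -(m:ℝ) := by push_cast at I5; linarith
      have e2 : -(m:ℝ) ≤ (p:ℝ) := by push_cast at I6; linarith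
      have : (p:ℝ) = -(m:ℝ) := le_antisymm e1 e2
      exact Or.inr (Or.inr (Or.inr (eq_vec (hp.trans this) (by rw [hq]; norm_num))))
    · -- q = 0
      have hple : p ≤ 1 := by
        have : (p:ℝ) ≤ 1 := by push_cast at I3; linarith
        exact_mod_cast this
      have hx1 : x 1 = 0 := by rw [hq]; norm_num
      rcases (by omega : p = 1 ∨ p = 0 ∨ p ≤ -1) with rfl | rfl | hneg
      · exact Or.inl (eq_vec (by rw [hp]; norm_num) hx1)
      · exfalso
        apply hprim.2.1
        funext i; fin_cases i <;> simp [hp, hx1]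
      · have hc : (((-p).toNat : ℕ) : ℝ) = -(p:ℝ) := by
          have h1 : (((-p).toNat : ℕ) : ℤ) = -p := Int.toNat_of_nonneg (by omega)
          exact_mod_cast h1
        have hn := hprim.2.2 (-p).toNat ![-1, 0]
          (lat_vec ⟨-1, by norm_num⟩ ⟨0, by norm_num⟩)
          (by
            funext i; fin_cases i <;>
              simp [Pi.smul_apply, hp, hx1, hc, nsmul_eq_mul])
        have : p = -1 := by omega
        subst this
        exact Or.inr (Or.inr (Or.inl (eq_vec (by rw [hp]; norm_num) hx1)))
    · -- q = 1
      have e1 : (p:ℝ) ≤ 0 := by push_cast at I3; linarith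
      have e2 : 0 ≤ (p:ℝ) := by push_cast at I4; linarith
      have : (p:ℝ) = 0 := le_antisymm e1 e2
      exact Or.inr (Or.inl (eq_vec (hp.trans this) (by rw [hq]; norm_num)))
  · intro h
    have hmem : x ∈ nabla m := by
      rcases h with rfl | rfl | rfl | rfl <;>
        exact subset_convexHull ℝ _ (by simp)
    refine ⟨hmem, ?_⟩
    rcases h with rfl | rfl | rfl | rfl
    · exact prim_of_coord (lat_vec ⟨1, by norm_num⟩ ⟨0, by norm_num⟩) 0 (Or.inl (by norm_num))
    · exact prim_of_coord (lat_vec ⟨0, by norm_num⟩ ⟨1, by norm_num⟩) 1 (Or.inl (by norm_num))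
    · exact prim_of_coord (lat_vec ⟨-1, by norm_num⟩ ⟨0, by norm_num⟩) 0 (Or.inr (by norm_num))
    · exact prim_of_coord (lat_vec ⟨-(m:ℤ), by push_cast; ring⟩ ⟨-1, by norm_num⟩) 1 (Or.inr (by norm_num))

lemma prim_union (m : ℕ) :
    {x ∈ nablaUnion m | IsPrimitivePt x}
      = ({![1,0], ![0,1], ![-1,0], ![-(m:ℝ),-1], ![-((m:ℝ)+1),-1]} : Set (Fin 2 → ℝ)) := by
  have hm : (0:ℝ) ≤ (m:ℝ) := Nat.cast_nonneg m
  ext x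
  simp only [Set.mem_setOf_eq, Set.mem_insert_iff, Set.mem_singleton_iff]
  constructor
  · rintro ⟨hx, hprim⟩
    rw [nablaUnion] at hx
    obtain ⟨p, hp⟩ := hprim.1 0
    obtain ⟨q, hq⟩ := hprim.1 1
    have gen : ∀ (a b c : ℝ),
        a * 1 + b * 0 ≤ c → a * 0 + b * 1 ≤ c → a * (-1) + b * 0 ≤ c →
        a * (-(m:ℝ)) + b * (-1) ≤ c → a * (-((m:ℝ)+1)) + b * (-1) ≤ c →
        a * x 0 + b * x 1 ≤ c := by
      intro a b c h1 h2 h3 h4 h5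
      refine hull_le ?_ hx
      intro v hv
      simp only [Set.mem_insert_iff, Set.mem_singleton_iff] at hv
      rcases hv with rfl | rfl | rfl | rfl | rfl <;>
        simp only [Matrix.cons_val_zero, Matrix.cons_val_one, Matrix.head_cons] <;> linarith
    have I1 := gen 0 1 1 (by norm_num) (by norm_num) (by norm_num) (by norm_num) (by norm_num)
    have I2 := gen 0 (-1) 1 (by norm_num) (by norm_num) (by norm_num) (by norm_num) (by norm_num)
    have I3 := gen 1 1 1 (by norm_num) (by norm_num) (by norm_num) (by linarith) (by linarith)
    have I4 := gen (-1) (((m:ℝ)+3)/2) (((m:ℝ)+3)/2) (by linarith) (by linarith) (by linarith)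
      (by ring_nf; linarith) (by ring_nf; linarith)
    have I5 := gen 1 (-((m:ℝ)+1)) 1 (by norm_num) (by linarith) (by norm_num)
      (by ring_nf; linarith) (by ring_nf; linarith)
    have I6 := gen (-1) (((m:ℝ)-1)/2) (((m:ℝ)+3)/2) (by linarith) (by linarith) (by linarith)
      (by ring_nf; linarith) (by ring_nf; linarith)
    rw [hp, hq] at I1 I2 I3 I4 I5 I6
    have hq1 : q ≤ 1 := by exact_mod_cast (by linarith : (q:ℝ) ≤ 1)
    have hq2 : -1 ≤ q := by exact_mod_cast (by linarith : (-1:ℝ) ≤ (q:ℝ))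
    interval_cases q
    · -- q = -1
      have e1 : p ≤ -(m:ℤ) := by
        have : (p:ℝ) ≤ -(m:ℝ) := by push_cast at I5; linarith
        exact_mod_cast this
      have e2 : -(m:ℤ) - 1 ≤ p := by
        have : -(m:ℝ) - 1 ≤ (p:ℝ) := by push_cast at I6; linarith
        exact_mod_cast this
      have hx1 : x 1 = -1 := by rw [hq]; norm_num
      rcases (by omega : p = -(m:ℤ) ∨ p = -(m:ℤ) - 1) with rfl | rfl
      · exact Or.inr (Or.inr (Or.inr (Or.inl (eq_vec (by rw [hp]; push_cast; ring) hx1))))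
      · exact Or.inr (Or.inr (Or.inr (Or.inr (eq_vec (by rw [hp]; push_cast; ring) hx1))))
    · -- q = 0
      have hple : p ≤ 1 := by
        have : (p:ℝ) ≤ 1 := by push_cast at I3; linarith
        exact_mod_cast this
      have hx1 : x 1 = 0 := by rw [hq]; norm_num
      rcases (by omega : p = 1 ∨ p = 0 ∨ p ≤ -1) with rfl | rfl | hneg
      · exact Or.inl (eq_vec (by rw [hp]; norm_num) hx1)
      · exfalso
        apply hprim.2.1
        funext i; fin_cases i <;> simp [hp, hx1]
      · have hc : (((-p).toNat : ℕ) : ℝ) = -(p:ℝ) := by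
          have h1 : (((-p).toNat : ℕ) : ℤ) = -p := Int.toNat_of_nonneg (by omega)
          exact_mod_cast h1
        have hn := hprim.2.2 (-p).toNat ![-1, 0]
          (lat_vec ⟨-1, by norm_num⟩ ⟨0, by norm_num⟩)
          (by
            funext i; fin_cases i <;>
              simp [Pi.smul_apply, hp, hx1, hc, nsmul_eq_mul])
        have : p = -1 := by omega
        subst this
        exact Or.inr (Or.inr (Or.inl (eq_vec (by rw [hp]; norm_num) hx1)))
    · -- q = 1
      have e1 : (p:ℝ) ≤ 0 := by push_cast at I3; linarith
      have e2 : 0 ≤ (p:ℝ) := by push_cast at I4; linarith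
      have : (p:ℝ) = 0 := le_antisymm e1 e2
      exact Or.inr (Or.inl (eq_vec (hp.trans this) (by rw [hq]; norm_num)))
  · intro h
    have hmem : x ∈ nablaUnion m := by
      rcases h with rfl | rfl | rfl | rfl | rfl <;>
        exact subset_convexHull ℝ _ (by simp)
    refine ⟨hmem, ?_⟩
    rcases h with rfl | rfl | rfl | rfl | rfl
    · exact prim_of_coord (lat_vec ⟨1, by norm_num⟩ ⟨0, by norm_num⟩) 0 (Or.inl (by norm_num))
    · exact prim_of_coord (lat_vec ⟨0, by norm_num⟩ ⟨1, by norm_num⟩) 1 (Or.inl (by norm_num))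
    · exact prim_of_coord (lat_vec ⟨-1, by norm_num⟩ ⟨0, by norm_num⟩) 0 (Or.inr (by norm_num))
    · exact prim_of_coord (lat_vec ⟨-(m:ℤ), by push_cast; ring⟩ ⟨-1, by norm_num⟩) 1 (Or.inr (by norm_num))
    · exact prim_of_coord (lat_vec ⟨-(m:ℤ)-1, by push_cast; ring⟩ ⟨-1, by norm_num⟩) 1 (Or.inr (by norm_num))

/-- `Conv(∇_m ∪ ∇_{m+1})` equals the explicit pentagon, and there are
reductions from it to `∇_m` and to `∇_{m+1}`, each removing exactly one primitive
lattice point. -/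
theorem nabla_union_reductions (m : ℕ) :
    convexHull ℝ (nabla m ∪ nabla (m+1)) = nablaUnion m ∧
    nabla m ⊆ nablaUnion m ∧ nabla (m+1) ⊆ nablaUnion m ∧
    {x ∈ nablaUnion m | IsPrimitivePt x}.ncard =
      {x ∈ nabla m | IsPrimitivePt x}.ncard + 1 ∧
    {x ∈ nablaUnion m | IsPrimitivePt x}.ncard =
      {x ∈ nabla (m+1) | IsPrimitivePt x}.ncard + 1 := by
  have hcast : (((m+1:ℕ)):ℝ) = (m:ℝ)+1 := by push_cast; ring
  have hsub1 : nabla m ⊆ nablaUnion m := by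
    rw [nabla, nablaUnion]
    apply convexHull_mono
    intro v hv
    simp only [Set.mem_insert_iff, Set.mem_singleton_iff] at hv ⊢
    tauto
  have hsub2 : nabla (m+1) ⊆ nablaUnion m := by
    rw [nabla, nablaUnion, hcast]
    apply convexHull_mono
    intro v hv
    simp only [Set.mem_insert_iff, Set.mem_singleton_iff] at hv ⊢
    tauto
  have h1 : convexHull ℝ (nabla m ∪ nabla (m+1)) = nablaUnion m := by
    apply Set.Subset.antisymm
    · exact convexHull_min (Set.union_subset hsub1 hsub2) (convex_convexHull ℝ _)
    · rw [nablaUnion]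
      apply convexHull_min ?_ (convex_convexHull ℝ _)
      intro v hv
      apply subset_convexHull ℝ _
      simp only [Set.mem_insert_iff, Set.mem_singleton_iff] at hv
      rcases hv with rfl | rfl | rfl | rfl | rfl
      · exact Or.inl (subset_convexHull ℝ _ (by simp))
      · exact Or.inl (subset_convexHull ℝ _ (by simp))
      · exact Or.inl (subset_convexHull ℝ _ (by simp))
      · exact Or.inl (subset_convexHull ℝ _ (by simp))
      · refine Or.inr (subset_convexHull ℝ
          ({![1,0], ![0,1], ![-1,0], ![-(((m+1:ℕ)):ℝ),-1]} : Set (Fin 2 → ℝ)) ?_)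
        rw [hcast]
        simp
  have hA : {x ∈ nablaUnion m | IsPrimitivePt x}.ncard = 5 := by
    rw [prim_union]
    exact ncard5 _ _ (by intro h; linarith)
  have hB : {x ∈ nabla m | IsPrimitivePt x}.ncard = 4 := by
    rw [prim_nabla]; exact ncard4 _
  have hC : {x ∈ nabla (m+1) | IsPrimitivePt x}.ncard = 4 := by
    rw [prim_nabla]; exact ncard4 _
  exact ⟨h1, hsub1, hsub2, by rw [hA, hB], by rw [hA, hC]⟩
end

section
/- For a lattice polygon in R^2 containing the origin in its interior, being canonical (the origin is the unique interior lattice point) is equivalent to being reflexive (the polar dual is a lattice polygon). -/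
open Set

namespace CanRefl


lemma exists_nonrep (a0 a1 q0 q1 : ℤ) (hD : 2 ≤ |a0*q1 - a1*q0|) :
    ∃ z0 z1 : ℤ, ∀ s t : ℤ, ¬(z0 = s*a0 + t*q0 ∧ z1 = s*a1 + t*q1) := by
  by_contra h
  push_neg at h
  obtain ⟨s, t, hs1, hs2⟩ := h 1 0
  obtain ⟨s', t', hs1', hs2'⟩ := h 0 1
  have hmul : (s*t' - t*s') * (a0*q1 - a1*q0) = 1 := by
    linear_combination (-(s'*a1+t'*q1))*hs1 + (-1)*hs2' + (s'*a0+t'*q0)*hs2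
  have : IsUnit (a0*q1 - a1*q0) :=
    IsUnit.of_mul_eq_one (s*t' - t*s') (by linear_combination hmul)
  rcases Int.isUnit_iff.mp this with h1 | h1 <;> rw [h1] at hD <;> simp at hD

/-- nonsingularity over ℝ. -/
lemma coeff_zero {A0 A1 Q0 Q1 γ δ : ℝ} (hD : A0*Q1 - A1*Q0 ≠ 0)
    (h0 : γ*A0 + δ*Q0 = 0) (h1 : γ*A1 + δ*Q1 = 0) : γ = 0 ∧ δ = 0 := by
  constructor
  · have : γ * (A0*Q1 - A1*Q0) = 0 := by linear_combination Q1*h0 - Q0*h1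
    rcases mul_eq_zero.mp this with h | h
    · exact h
    · exact absurd h hD
  · have : δ * (A0*Q1 - A1*Q0) = 0 := by linear_combination (-A1)*h0 + A0*h1
    rcases mul_eq_zero.mp this with h | h
    · exact h
    · exact absurd h hD

lemma exists_frac_rep (a0 a1 q0 q1 : ℤ) (hD2 : 2 ≤ |a0*q1 - a1*q0|) :
    ∃ (x0 x1 : ℤ) (γ δ : ℝ), 0 ≤ γ ∧ γ < 1 ∧ 0 ≤ δ ∧ δ < 1 ∧ ¬(γ = 0 ∧ δ = 0) ∧
      (x0:ℝ) = γ*a0 + δ*q0 ∧ (x1:ℝ) = γ*a1 + δ*q1 := by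
  have hDne : a0*q1 - a1*q0 ≠ 0 := by
    intro h; rw [h] at hD2; simp at hD2
  have hDR : ((a0*q1 - a1*q0 : ℤ) : ℝ) ≠ 0 := by exact_mod_cast hDne
  obtain ⟨z0, z1, hz⟩ := exists_nonrep a0 a1 q0 q1 hD2
  set α : ℝ := ((z0*q1 - z1*q0 : ℤ) : ℝ) / ((a0*q1 - a1*q0 : ℤ) : ℝ) with hα
  set β : ℝ := ((a0*z1 - a1*z0 : ℤ) : ℝ) / ((a0*q1 - a1*q0 : ℤ) : ℝ) with hβ
  have hz0 : (z0:ℝ) = α*a0 + β*q0 := by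
    rw [hα, hβ, div_mul_eq_mul_div, div_mul_eq_mul_div, ← add_div, eq_comm,
      div_eq_iff hDR]
    push_cast; ring
  have hz1 : (z1:ℝ) = α*a1 + β*q1 := by
    rw [hα, hβ, div_mul_eq_mul_div, div_mul_eq_mul_div, ← add_div, eq_comm,
      div_eq_iff hDR]
    push_cast; ring
  refine ⟨z0 - ⌊α⌋*a0 - ⌊β⌋*q0, z1 - ⌊α⌋*a1 - ⌊β⌋*q1, Int.fract α, Int.fract β,
    Int.fract_nonneg α, Int.fract_lt_one α, Int.fract_nonneg β, Int.fract_lt_one β, ?_, ?_, ?_⟩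
  · rintro ⟨h1, h2⟩
    have hαf : α = (⌊α⌋ : ℝ) := by unfold Int.fract at h1; linarith
    have hβf : β = (⌊β⌋ : ℝ) := by unfold Int.fract at h2; linarith
    refine hz ⌊α⌋ ⌊β⌋ ⟨?_, ?_⟩
    · have h' : (z0:ℝ) = ((⌊α⌋*a0 + ⌊β⌋*q0 : ℤ) : ℝ) := by
        push_cast; linear_combination hz0 + (a0:ℝ)*hαf + (q0:ℝ)*hβf
      exact_mod_cast h'
    · have h' : (z1:ℝ) = ((⌊α⌋*a1 + ⌊β⌋*q1 : ℤ) : ℝ) := by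
        push_cast; linear_combination hz1 + (a1:ℝ)*hαf + (q1:ℝ)*hβf
      exact_mod_cast h'
  · push_cast; unfold Int.fract; linear_combination hz0
  · push_cast; unfold Int.fract; linear_combination hz1

lemma key_lattice (a0 a1 p0 p1 : ℤ) (hc : IsCoprime p0 p1)
    (hd : 2 ≤ |p0*a1 - p1*a0|) :
    ∃ (x0 x1 : ℤ) (γ δ : ℝ), 0 ≤ γ ∧ 0 ≤ δ ∧ γ + δ < 1 ∧ ¬(x0 = 0 ∧ x1 = 0) ∧
      (x0:ℝ) = γ*a0 + δ*(a0+p0) ∧ (x1:ℝ) = γ*a1 + δ*(a1+p1) := by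
  have hD2 : 2 ≤ |a0*(a1+p1) - a1*(a0+p0)| := by
    rw [show a0*(a1+p1) - a1*(a0+p0) = -(p0*a1 - p1*a0) by ring, abs_neg]; exact hd
  have hDne : a0*(a1+p1) - a1*(a0+p0) ≠ 0 := by intro h; rw [h] at hD2; simp at hD2
  have hDneR : ((a0:ℝ))*((a1:ℝ)+(p1:ℝ)) - ((a1:ℝ))*((a0:ℝ)+(p0:ℝ)) ≠ 0 := by
    exact_mod_cast hDne
  obtain ⟨x0, x1, γ, δ, hγ0, hγ1, hδ0, hδ1, hnb, hX0, hX1⟩ :=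
    exists_frac_rep a0 a1 (a0+p0) (a1+p1) hD2
  push_cast at hX0 hX1
  have hxne : ¬(x0 = 0 ∧ x1 = 0) := by
    rintro ⟨h1, h2⟩
    have c0 : ((x0:ℤ):ℝ) = 0 := by rw [h1]; simp
    have c1 : ((x1:ℤ):ℝ) = 0 := by rw [h2]; simp
    refine hnb (coeff_zero hDneR ?_ ?_)
    · linear_combination -hX0 + c0
    · linear_combination -hX1 + c1
  rcases lt_trichotomy (γ + δ) 1 with hlt | heq | hgt
  · exact ⟨x0, x1, γ, δ, hγ0, hδ0, hlt, hxne, hX0, hX1⟩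
  · exfalso
    have hδpos : 0 < δ := by
      rcases hδ0.lt_or_eq with h | h
      · exact h
      · rw [← h] at heq; linarith
    have he0 : ((x0:ℝ)) - a0 = δ * p0 := by linear_combination hX0 + (a0:ℝ)*heq
    have he1 : ((x1:ℝ)) - a1 = δ * p1 := by linear_combination hX1 + (a1:ℝ)*heq
    obtain ⟨s, t, hst⟩ := hc
    have hstR : (s:ℝ)*p0 + t*p1 = 1 := by exact_mod_cast congrArg (fun n : ℤ => (n:ℝ)) hst
    have hδint : δ = ((s*(x0-a0) + t*(x1-a1) : ℤ) : ℝ) := by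
      push_cast
      linear_combination (-(s:ℝ))*he0 - (t:ℝ)*he1 - δ*hstR
    set k : ℤ := s*(x0-a0) + t*(x1-a1) with hk
    have h0k : (0:ℝ) < (k:ℝ) := by rw [← hδint]; exact hδpos
    have h1k : (k:ℝ) < 1 := by rw [← hδint]; linarith
    have g1 : (0:ℤ) < k := by exact_mod_cast h0k
    have g2 : k < 1 := by exact_mod_cast h1k
    omega
  · refine ⟨a0 + (a0+p0) - x0, a1 + (a1+p1) - x1, 1 - γ, 1 - δ, by linarith, by linarith,
      by linarith, ?_, ?_, ?_⟩
    · rintro ⟨h1, h2⟩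
      have c0 : ((a0 + (a0+p0) - x0 : ℤ):ℝ) = 0 := by rw [h1]; simp
      have c1 : ((a1 + (a1+p1) - x1 : ℤ):ℝ) = 0 := by rw [h2]; simp
      push_cast at c0 c1
      have := coeff_zero hDneR (γ := 1-γ) (δ := 1-δ) (by linear_combination c0 + hX0)
        (by linear_combination c1 + hX1)
      linarith [this.1]
    · push_cast; linear_combination -hX0
    · push_cast; linear_combination -hX1


abbrev V := Fin 2 → ℝ

def dot (u v : V) : ℝ := u 0 * v 0 + u 1 * v 1

lemma sum_eq_dot (u v : V) : ∑ i, u i * v i = dot u v := by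
  simp [Fin.sum_univ_two, dot]

lemma mem_polarDual {P : Set V} {u : V} : u ∈ polarDual P ↔ ∀ v ∈ P, -1 ≤ dot u v := by
  unfold polarDual
  simp only [Set.mem_setOf_eq, sum_eq_dot]

lemma isLinearMap_dot_right (v : V) : IsLinearMap ℝ (fun u : V => dot u v) := by
  constructor
  · intro a b; simp [dot]; ring
  · intro c a; simp [dot, smul_eq_mul]; ring

lemma isLinearMap_dot_left (u : V) : IsLinearMap ℝ (fun v : V => dot u v) := by
  constructor
  · intro a b; simp [dot]; ring
  · intro c a; simp [dot, smul_eq_mul]; ring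

lemma convex_polarDual (P : Set V) : Convex ℝ (polarDual P) := by
  have h : polarDual P = ⋂ v ∈ P, {u : V | -1 ≤ dot u v} := by
    ext u; simp [mem_polarDual]
  rw [h]
  exact convex_iInter fun v => convex_iInter fun _ => convex_halfSpace_ge (isLinearMap_dot_right v) (-1)

lemma isClosed_polarDual (P : Set V) : IsClosed (polarDual P) := by
  have h : polarDual P = ⋂ v ∈ P, {u : V | -1 ≤ dot u v} := by
    ext u; simp [mem_polarDual]
  rw [h]
  refine isClosed_iInter fun v => isClosed_iInter fun _ => ?_
  have hc : Continuous (fun u : V => dot u v) := by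
    unfold dot; fun_prop
  exact isClosed_le continuous_const hc

/-- membership in polar dual of a hull can be checked on generators -/
lemma mem_polarDual_hull {S : Finset V} {u : V} :
    u ∈ polarDual (convexHull ℝ (S : Set V)) ↔ ∀ s ∈ S, -1 ≤ dot u s := by
  rw [mem_polarDual]
  constructor
  · intro h s hs
    exact h s (subset_convexHull ℝ _ (by exact_mod_cast hs))
  · intro h v hv
    have hsub : convexHull ℝ (S : Set V) ⊆ {v : V | -1 ≤ dot u v} :=
      convexHull_min (fun s hs => h s (by exact_mod_cast hs))
        (convex_halfSpace_ge (isLinearMap_dot_left u) (-1))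
    exact hsub hv

lemma lattice_sub_coords {x : V} (hx : IsLatticePoint x) :
    ∃ a : Fin 2 → ℤ, ∀ i, x i = ((a i : ℝ)) := by
  choose a ha using hx
  exact ⟨a, ha⟩

/-- a set of lattice points inside a closed ball is finite -/
lemma finite_of_lattice_bounded {E : Set V} {R : ℝ}
    (hl : ∀ x ∈ E, IsLatticePoint x) (hb : E ⊆ Metric.closedBall 0 R) : E.Finite := by
  classical
  set N : ℕ := ⌈R⌉₊ with hN
  have hsub : E ⊆ (fun a : ℤ × ℤ => (![((a.1 : ℝ)), ((a.2 : ℝ))] : V)) ''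
      (Set.Icc (-(N:ℤ)) N ×ˢ Set.Icc (-(N:ℤ)) N) := by
    intro x hx
    obtain ⟨a, ha⟩ := lattice_sub_coords (hl x hx)
    have hxb : ∀ i, |x i| ≤ R := by
      intro i
      have h1 : ‖x i‖ ≤ ‖x‖ := norm_le_pi_norm x i
      have h2 : ‖x‖ ≤ R := by
        have := hb hx
        simpa [Metric.mem_closedBall, dist_zero_right] using this
      calc |x i| = ‖x i‖ := (Real.norm_eq_abs _).symm
        _ ≤ R := h1.trans h2
    have key : ∀ i, -(N:ℤ) ≤ a i ∧ a i ≤ N := by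
      intro i
      have : |((a i : ℝ))| ≤ (N : ℝ) := by
        rw [← ha i]
        exact (hxb i).trans (Nat.le_ceil R)
      have : |a i| ≤ (N:ℤ) := by exact_mod_cast this
      constructor <;> [linarith [neg_abs_le (a i)]; linarith [le_abs_self (a i)]]
    refine ⟨(a 0, a 1), ⟨⟨(key 0).1, (key 0).2⟩, ⟨(key 1).1, (key 1).2⟩⟩, ?_⟩
    funext i
    fin_cases i <;> simp [ha 0, ha 1]
  exact Set.Finite.subset (Set.Finite.image _ ((Set.finite_Icc _ _).prod (Set.finite_Icc _ _))) hsub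

/-- polar dual is bounded when 0 is interior -/
lemma polarDual_subset_ball {P : Set V} (h0 : (0 : V) ∈ interior P) :
    ∃ R : ℝ, 0 ≤ R ∧ polarDual P ⊆ Metric.closedBall 0 R := by
  obtain ⟨ε, hε, hball⟩ := Metric.isOpen_iff.mp isOpen_interior 0 h0
  refine ⟨2/ε, by positivity, ?_⟩
  intro u hu
  rw [mem_polarDual] at hu
  have key : ∀ i, |u i| ≤ 2/ε := by
    intro i
    have hmem : ∀ σ : ℝ, |σ| = 1 → ((σ * (ε/2)) • (Pi.single i 1 : V)) ∈ P := by
      intro σ hσ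
      have : ((σ * (ε/2)) • (Pi.single i 1 : V)) ∈ Metric.ball (0:V) ε := by
        rw [Metric.mem_ball, dist_zero_right, norm_smul]
        have h1 : ‖(Pi.single i 1 : V)‖ = 1 := by
          simp [Pi.norm_single]
        rw [h1, mul_one, Real.norm_eq_abs, abs_mul, hσ, one_mul, abs_of_pos (by positivity : (0:ℝ) < ε/2)]
        linarith
      exact interior_subset (hball this)
    have hdot : ∀ σ : ℝ, dot u ((σ * (ε/2)) • (Pi.single i 1 : V)) = σ * (ε/2) * u i := by
      intro σ
      fin_cases i <;> simp [dot, Pi.single_apply] <;> ring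
    have hp := hu _ (hmem 1 (by norm_num))
    have hm := hu _ (hmem (-1) (by norm_num))
    rw [hdot] at hp hm
    rw [abs_le]
    have h2 : u i ≤ 2/ε := by rw [le_div_iff₀ hε]; nlinarith
    have h3 : -u i ≤ 2/ε := by rw [le_div_iff₀ hε]; nlinarith
    constructor <;> linarith
  have : ‖u‖ ≤ 2/ε := by
    apply pi_norm_le_iff_of_nonneg (by positivity) |>.mpr
    intro i
    rw [Real.norm_eq_abs]; exact key i
  simpa [Metric.mem_closedBall, dist_zero_right] using this


lemma reflexive_imp_canonical {P : Set V} {S : Finset V}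
    (hPeq : P = convexHull ℝ (S : Set V)) (h0 : (0:V) ∈ interior P)
    (hdual : IsLatticePolytope (polarDual P)) : IsCanonical P := by
  obtain ⟨T, hTl, hTeq⟩ := hdual
  intro x hx hxl
  by_contra hxne
  have hPconv : Convex ℝ P := hPeq ▸ convex_convexHull ℝ _
  have hPcl : IsClosed P := hPeq ▸ (S.finite_toSet.isCompact_convexHull ℝ).isClosed
  have hPcomp : IsCompact P := hPeq ▸ S.finite_toSet.isCompact_convexHull ℝ
  -- Step 1: every lattice vertex of the dual pairs nonnegatively with x
  have step1 : ∀ u ∈ (T : Set V), (0:ℝ) ≤ dot u x := by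
    intro u hu
    have huP : u ∈ polarDual P := hTeq ▸ subset_convexHull ℝ _ hu
    rw [mem_polarDual] at huP
    obtain ⟨a, ha⟩ := lattice_sub_coords (hTl u hu)
    obtain ⟨b, hb⟩ := lattice_sub_coords hxl
    have hdint : dot u x = ((a 0 * b 0 + a 1 * b 1 : ℤ) : ℝ) := by
      simp only [dot, ha 0, ha 1, hb 0, hb 1]; push_cast; ring
    by_contra hneg
    push_neg at hneg
    have hint : a 0 * b 0 + a 1 * b 1 ≤ -1 := by
      have : ((a 0 * b 0 + a 1 * b 1 : ℤ) : ℝ) < 0 := hdint ▸ hneg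
      have h' : a 0 * b 0 + a 1 * b 1 < 0 := by exact_mod_cast this
      omega
    have hle : dot u x ≤ -1 := by
      rw [hdint]
      exact_mod_cast hint
    -- push x slightly outward
    obtain ⟨ε, hε, hball⟩ := Metric.isOpen_iff.mp isOpen_interior x hx
    set δ : ℝ := ε/(2*(‖x‖+1)) with hδ
    have hδpos : 0 < δ := by
      apply div_pos hε
      positivity
    have hx' : (1+δ)•x ∈ P := by
      apply interior_subset
      apply hball
      rw [Metric.mem_ball, dist_eq_norm]
      have hsub : (1+δ)•x - x = δ•x := by module
      rw [hsub, norm_smul, Real.norm_eq_abs, abs_of_pos hδpos]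
      have h1 : δ * ‖x‖ < δ * (‖x‖+1) := by nlinarith
      have h2 : δ * (‖x‖+1) = ε/2 := by
        rw [hδ]; field_simp
      linarith
    have hd' : dot u ((1+δ)•x) = (1+δ) * dot u x := by
      simp [dot, Pi.smul_apply, smul_eq_mul]; ring
    have := huP _ hx'
    rw [hd'] at this
    nlinarith
  -- Step 2: all of the dual pairs nonnegatively with x
  have step2 : ∀ u ∈ polarDual P, (0:ℝ) ≤ dot u x := by
    intro u hu
    have : polarDual P ⊆ {u : V | 0 ≤ dot u x} := by
      rw [hTeq]
      exact convexHull_min step1 (convex_halfSpace_ge (isLinearMap_dot_right x) 0)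
    exact this hu
  -- Step 3: the whole ray through x is in P
  have step3 : ∀ t : ℝ, 0 ≤ t → t•x ∈ P := by
    intro t ht
    by_contra hP'
    obtain ⟨f, c, hfa, hfc⟩ := geometric_hahn_banach_closed_point hPconv hPcl hP'
    have hc0 : (0:ℝ) < c := by
      have h00 : (0:V) ∈ P := interior_subset h0
      have := hfa 0 h00
      simpa using this
    set w : V := fun i => f (Pi.single i 1) with hw
    have hfw : ∀ v : V, f v = dot w v := by
      intro v
      have hv : v = v 0 • (Pi.single 0 1 : V) + v 1 • (Pi.single 1 1 : V) := by
        funext j; fin_cases j <;> simp [Pi.single_apply]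
      conv_lhs => rw [hv]
      simp only [map_add, map_smul, smul_eq_mul, dot, hw]
      ring
    set u : V := (-(1/c)) • w with hu
    have hdu : ∀ v : V, dot u v = -(1/c) * f v := by
      intro v
      rw [hfw]
      simp [hu, dot, Pi.smul_apply, smul_eq_mul]; ring
    have humem : u ∈ polarDual P := by
      rw [mem_polarDual]
      intro v hv
      rw [hdu]
      have h1 : f v / c ≤ 1 := by
        rw [div_le_one hc0]; exact (hfa v hv).le
      have h2 : -(1/c) * f v = -(f v / c) := by ring
      rw [h2]; linarith
    have hge := step2 u humem
    have hlt : dot u (t•x) < -1 := by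
      rw [hdu]
      have h1 : c < f (t•x) := hfc
      have h2 : 1/c > 0 := by positivity
      have h3 : -(1/c) * f (t•x) < -(1/c) * c := by nlinarith
      have h4 : -(1/c) * c = -1 := by field_simp
      linarith
    have heq : dot u (t•x) = t * dot u x := by
      simp [dot, Pi.smul_apply, smul_eq_mul]; ring
    nlinarith
  -- Step 4: contradiction with boundedness
  obtain ⟨i, hxi⟩ : ∃ i, x i ≠ 0 := by
    by_contra h; push_neg at h
    exact hxne (funext fun i => by simpa using h i)
  obtain ⟨R, hR⟩ := hPcomp.isBounded.subset_closedBall 0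
  have hR0 : 0 ≤ R := by
    have := hR (interior_subset h0)
    simpa [Metric.mem_closedBall] using this
  set t : ℝ := (R+1)/|x i| with ht
  have htpos : 0 < t := by
    apply div_pos (by linarith)
    exact abs_pos.mpr hxi
  have hmem := step3 t htpos.le
  have h1 : ‖(t•x) i‖ ≤ ‖t•x‖ := norm_le_pi_norm _ i
  have h2 : ‖t•x‖ ≤ R := by
    have := hR hmem
    simpa [Metric.mem_closedBall, dist_zero_right] using this
  have h3 : ‖(t•x) i‖ = R+1 := by
    rw [Pi.smul_apply, smul_eq_mul, Real.norm_eq_abs, abs_mul, ht,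
      abs_of_pos (show (0:ℝ) < (R+1)/|x i| from htpos)]
    field_simp
  linarith


lemma exists_primitive (v0 v1 : ℤ) (h : ¬(v0 = 0 ∧ v1 = 0)) :
    ∃ m p0 p1 : ℤ, 0 < m ∧ IsCoprime p0 p1 ∧ v0 = m*p0 ∧ v1 = m*p1 := by
  have hg : 0 < Int.gcd v0 v1 := by
    rw [Int.gcd_pos_iff]
    by_contra hc; push_neg at hc
    exact h ⟨hc.1, hc.2⟩
  refine ⟨(Int.gcd v0 v1 : ℤ), v0 / (Int.gcd v0 v1 : ℤ), v1 / (Int.gcd v0 v1 : ℤ),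
    by exact_mod_cast hg, ?_, ?_, ?_⟩
  · rw [Int.isCoprime_iff_gcd_eq_one]
    exact Int.gcd_div_gcd_div_gcd hg
  · exact (Int.mul_ediv_cancel' (Int.gcd_dvd_left _ _)).symm
  · exact (Int.mul_ediv_cancel' (Int.gcd_dvd_right _ _)).symm

lemma exists_two_active {P : Set V} {S : Finset V} (hS : S.Nonempty)
    (hPeq : P = convexHull ℝ (S : Set V)) {u : V}
    (hu : u ∈ Set.extremePoints ℝ (polarDual P)) :
    ∃ A ∈ S, ∃ B ∈ S, dot u A = -1 ∧ dot u B = -1 ∧ A 0 * B 1 - A 1 * B 0 ≠ 0 := by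
  obtain ⟨huP, hext⟩ := hu
  have huP' : ∀ s ∈ S, -1 ≤ dot u s := by
    rw [hPeq, mem_polarDual_hull] at huP; exact huP
  by_contra hcon
  push_neg at hcon
  obtain ⟨d, hdne, hdact⟩ : ∃ d : V, d ≠ 0 ∧ ∀ s ∈ S, dot u s = -1 → dot d s = 0 := by
    by_cases hA : ∃ A ∈ S, dot u A = -1
    · obtain ⟨A, hAS, hAact⟩ := hA
      refine ⟨![-(A 1), A 0], ?_, ?_⟩
      · intro hz
        have h0 : A 0 = 0 := by have := congrFun hz 1; simpa using this
        have h1 : A 1 = 0 := by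
          have := congrFun hz 0; simp at this; exact this
        rw [show dot u A = u 0 * A 0 + u 1 * A 1 from rfl, h0, h1] at hAact
        norm_num at hAact
      · intro s hs hsact
        have hdet := hcon A hAS s hs hAact hsact
        show dot ![-(A 1), A 0] s = 0
        simp [dot]
        linarith
    · push_neg at hA
      refine ⟨![1, 0], ?_, fun s hs hact => absurd hact (hA s hs)⟩
      intro hz
      have := congrFun hz 0; simp at this
  classical
  set f : V → ℝ := fun s => if dot u s = -1 then 1 else (dot u s + 1)/(|dot d s| + 1) with hf
  set ε : ℝ := S.inf' hS f with hε
  have hεpos : 0 < ε := by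
    rw [hε, Finset.lt_inf'_iff]
    intro b hb
    by_cases hb' : dot u b = -1
    · simp [hf, hb']
    · have h1 : -1 < dot u b := lt_of_le_of_ne (huP' b hb) (Ne.symm hb')
      simp only [hf, hb', if_false]
      apply div_pos (by linarith) (by positivity)
  have hbound : ∀ s ∈ S, dot u s ≠ -1 → ε * |dot d s| < dot u s + 1 := by
    intro s hs hact
    have h1 : ε ≤ f s := Finset.inf'_le f hs
    rw [hf] at h1; simp only [hact, if_false] at h1
    have h2 : ε * (|dot d s| + 1) ≤ dot u s + 1 := by
      rw [← le_div_iff₀ (by positivity : (0:ℝ) < |dot d s| + 1)]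
      exact h1
    nlinarith
  have hmem : ∀ σ : ℝ, |σ| ≤ 1 → u + (σ * ε)•d ∈ polarDual P := by
    intro σ hσ
    rw [hPeq, mem_polarDual_hull]
    intro s hs
    have hds : dot (u + (σ * ε)•d) s = dot u s + (σ * ε) * dot d s := by
      simp [dot, Pi.add_apply, Pi.smul_apply, smul_eq_mul]; ring
    rw [hds]
    by_cases hact : dot u s = -1
    · rw [hdact s hs hact, hact]; simp
    · have hb := hbound s hs hact
      have habs : |(σ * ε) * dot d s| ≤ ε * |dot d s| := by
        rw [abs_mul, abs_mul, abs_of_pos hεpos]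
        have : |σ| * ε ≤ 1 * ε := by nlinarith
        nlinarith [abs_nonneg (dot d s)]
      have := neg_abs_le ((σ * ε) * dot d s)
      linarith
  have h1 := hmem 1 (by norm_num)
  have h2 := hmem (-1) (by norm_num)
  rw [one_mul] at h1
  have hseg : u ∈ openSegment ℝ (u + ε•d) (u + (-1 * ε)•d) := by
    refine ⟨1/2, 1/2, by norm_num, by norm_num, by norm_num, ?_⟩
    funext i
    simp [Pi.add_apply, Pi.smul_apply, smul_eq_mul]
    ring
  have he1 := hext h1 h2 hseg
  have : ε•d = 0 := by
    have := congrArg (fun z => z - u) he1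
    simpa using this
  rcases smul_eq_zero.mp this with h | h
  · exact absurd h (ne_of_gt hεpos)
  · exact hdne h


lemma extreme_lattice {P : Set V} {S : Finset V} (hS : S.Nonempty)
    (hSl : ∀ x ∈ S, IsLatticePoint x)
    (hPeq : P = convexHull ℝ (S : Set V)) (h0 : (0:V) ∈ interior P)
    (hcan : IsCanonical P) {u : V} (hu : u ∈ Set.extremePoints ℝ (polarDual P)) :
    IsLatticePoint u := by
  obtain ⟨A, hAS, B, hBS, hA1, hB1, hdet⟩ := exists_two_active hS hPeq hu
  obtain ⟨a, ha⟩ := lattice_sub_coords (hSl A hAS)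
  obtain ⟨b, hb⟩ := lattice_sub_coords (hSl B hBS)
  have hvne : ¬(b 0 - a 0 = 0 ∧ b 1 - a 1 = 0) := by
    rintro ⟨h1, h2⟩
    apply hdet
    rw [ha 0, ha 1, hb 0, hb 1]
    have e0 : ((b 0 : ℝ)) = ((a 0 : ℝ)) := by exact_mod_cast (by omega : b 0 = a 0)
    have e1 : ((b 1 : ℝ)) = ((a 1 : ℝ)) := by exact_mod_cast (by omega : b 1 = a 1)
    rw [e0, e1]; ring
  obtain ⟨m, p0, p1, hm, hcop, hv0, hv1⟩ := exists_primitive (b 0 - a 0) (b 1 - a 1) hvne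
  set d : ℤ := p0 * a 1 - p1 * a 0 with hd
  have hdne : d ≠ 0 := by
    intro h
    apply hdet
    rw [ha 0, ha 1, hb 0, hb 1]
    have hAB : (a 0) * (b 1) - (a 1) * (b 0) = -(m * d) := by
      rw [hd]; linear_combination (a 0)*hv1 - (a 1)*hv0
    have : (a 0) * (b 1) - (a 1) * (b 0) = 0 := by rw [hAB, h]; ring
    exact_mod_cast this
  have hdRne : ((d:ℤ):ℝ) ≠ 0 := by exact_mod_cast hdne
  -- real linear equations
  have E1 : u 0 * ((a 0 : ℝ)) + u 1 * ((a 1 : ℝ)) = -1 := by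
    have : u 0 * A 0 + u 1 * A 1 = -1 := hA1
    rwa [ha 0, ha 1] at this
  have E2 : u 0 * ((b 0 : ℝ)) + u 1 * ((b 1 : ℝ)) = -1 := by
    have : u 0 * B 0 + u 1 * B 1 = -1 := hB1
    rwa [hb 0, hb 1] at this
  have hmR : (0:ℝ) < (m:ℝ) := by exact_mod_cast hm
  have hv0R : ((b 0 : ℝ)) - ((a 0 : ℝ)) = (m:ℝ) * (p0:ℝ) := by exact_mod_cast hv0
  have hv1R : ((b 1 : ℝ)) - ((a 1 : ℝ)) = (m:ℝ) * (p1:ℝ) := by exact_mod_cast hv1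
  have E3 : u 0 * (p0:ℝ) + u 1 * (p1:ℝ) = 0 := by
    apply mul_left_cancel₀ (ne_of_gt hmR)
    linear_combination E2 - E1 - u 0 * hv0R - u 1 * hv1R
  have hdcast : ((d:ℤ):ℝ) = (p0:ℝ) * (a 1:ℝ) - (p1:ℝ) * (a 0:ℝ) := by
    rw [hd]; push_cast; ring
  have hu0d : u 0 * ((d:ℤ):ℝ) = (p1:ℝ) := by
    rw [hdcast]; linear_combination ((a 1:ℝ))*E3 - ((p1:ℝ))*E1
  have hu1d : u 1 * ((d:ℤ):ℝ) = -(p0:ℝ) := by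
    rw [hdcast]; linear_combination ((p0:ℝ))*E1 - ((a 0:ℝ))*E3
  by_cases h2 : 2 ≤ d.natAbs
  · -- impossible: produces a second interior lattice point
    exfalso
    have hd2 : 2 ≤ |p0 * a 1 - p1 * a 0| := by
      rw [← hd, Int.abs_eq_natAbs]; exact_mod_cast h2
    obtain ⟨x0, x1, γ, δ, hγ, hδ, hsum, hxne, hx0, hx1⟩ := key_lattice (a 0) (a 1) p0 p1 hcop hd2
    set X : V := ![(x0:ℝ), (x1:ℝ)] with hX
    set t : ℝ := γ + δ with htdef
    have ht0 : 0 ≤ t := by rw [htdef]; linarith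
    have htpos : 0 < t := by
      rcases ht0.lt_or_eq with h | h
      · exact h
      · exfalso
        apply hxne
        have hγ0 : γ = 0 := by rw [htdef] at h; linarith
        have hδ0 : δ = 0 := by rw [htdef] at h; linarith
        constructor
        · have : (x0:ℝ) = 0 := by rw [hx0, hγ0, hδ0]; ring
          exact_mod_cast this
        · have : (x1:ℝ) = 0 := by rw [hx1, hγ0, hδ0]; ring
          exact_mod_cast this
    have hmR1 : (1:ℝ) ≤ (m:ℝ) := by exact_mod_cast hm
    set θ : ℝ := δ / (t * (m:ℝ)) with hθ
    have hθ0 : 0 ≤ θ := div_nonneg hδ (by positivity)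
    have hθ1 : θ ≤ 1 := by
      rw [hθ, div_le_one (by positivity)]
      nlinarith
    set e : V := (1-θ)•A + θ•B with he
    have hPconv : Convex ℝ P := hPeq ▸ convex_convexHull ℝ _
    have heP : e ∈ P := by
      rw [hPeq]
      have hseg : e ∈ segment ℝ A B := ⟨1-θ, θ, by linarith, hθ0, by ring, rfl⟩
      exact (convex_convexHull ℝ _).segment_subset
        (subset_convexHull ℝ _ (by exact_mod_cast hAS))
        (subset_convexHull ℝ _ (by exact_mod_cast hBS)) hseg
    have hkey : t * θ * (m:ℝ) = δ := by
      rw [hθ]; field_simp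
    have hXmem : X ∈ openSegment ℝ (0:V) e := by
      refine ⟨1-t, t, by rw [htdef]; linarith, htpos, by ring, ?_⟩
      funext i
      fin_cases i
      · have hb0R : (b 0 : ℝ) = (a 0 : ℝ) + (m:ℝ) * (p0:ℝ) := by linarith
        simp only [Fin.zero_eta, Fin.isValue, he, hX, Pi.add_apply, Pi.smul_apply,
          smul_eq_mul, Pi.zero_apply, Matrix.cons_val_zero]
        rw [ha 0, hb 0]
        push_cast
        linear_combination (t*θ)*hb0R + ((p0:ℝ))*hkey - hx0 + ((a 0:ℝ))*htdef
      · have hb1R : (b 1 : ℝ) = (a 1 : ℝ) + (m:ℝ) * (p1:ℝ) := by linarith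
        simp only [Fin.mk_one, Fin.isValue, he, hX, Pi.add_apply, Pi.smul_apply,
          smul_eq_mul, Pi.zero_apply, Matrix.cons_val_one, Matrix.head_cons]
        rw [ha 1, hb 1]
        push_cast
        linear_combination (t*θ)*hb1R + ((p1:ℝ))*hkey - hx1 + ((a 1:ℝ))*htdef
    have hXint : X ∈ interior P :=
      hPconv.openSegment_interior_self_subset_interior h0 heP hXmem
    have hXl : IsLatticePoint X := by
      intro i
      fin_cases i
      · exact ⟨x0, by simp [hX]⟩
      · exact ⟨x1, by simp [hX]⟩
    have hX0 := hcan X hXint hXl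
    apply hxne
    constructor
    · have : X 0 = 0 := by rw [hX0]; rfl
      simp [hX] at this
      exact_mod_cast this
    · have : X 1 = 0 := by rw [hX0]; rfl
      simp [hX] at this
      exact_mod_cast this
  · -- d = ±1, so u is a lattice point
    have hcase : d = 1 ∨ d = -1 := by omega
    have hsq : ((d:ℤ):ℝ) * ((d:ℤ):ℝ) = 1 := by
      rcases hcase with h | h <;> rw [h] <;> norm_num
    intro i
    fin_cases i
    · refine ⟨d * p1, ?_⟩
      show u 0 = ((d * p1 : ℤ) : ℝ)
      push_cast
      linear_combination ((d:ℤ):ℝ)*hu0d - u 0 * hsq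
    · refine ⟨-(d * p0), ?_⟩
      show u 1 = ((-(d * p0) : ℤ) : ℝ)
      push_cast
      linear_combination ((d:ℤ):ℝ)*hu1d - u 1 * hsq


end CanRefl

open CanRefl in
/-- For a lattice polygon with the origin in its interior, canonical is
equivalent to reflexive. -/
theorem canonical_iff_reflexive (P : Set (Fin 2 → ℝ))
    (hP : IsLatticePolytope P) (h0 : 0 ∈ interior P) :
    IsCanonical P ↔ IsLatticePolytope (polarDual P) := by
  obtain ⟨S, hSl, hPeq⟩ := hP
  constructor
  · intro hcan
    have h0P : (0 : V) ∈ P := interior_subset h0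
    have hS : S.Nonempty := by
      by_contra h
      rw [Finset.not_nonempty_iff_eq_empty] at h
      rw [h, Finset.coe_empty, convexHull_empty] at hPeq
      exact absurd (hPeq ▸ h0P) (Set.notMem_empty 0)
    obtain ⟨R, hR0, hRsub⟩ := polarDual_subset_ball h0
    have hcomp : IsCompact (polarDual P) :=
      Metric.isCompact_of_isClosed_isBounded (isClosed_polarDual P)
        (Metric.isBounded_closedBall.subset hRsub)
    have hconv := convex_polarDual P
    have hElat : ∀ x ∈ Set.extremePoints ℝ (polarDual P), IsLatticePoint x :=
      fun x hx => extreme_lattice hS hSl hPeq h0 hcan hx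
    have hEfin : (Set.extremePoints ℝ (polarDual P)).Finite :=
      finite_of_lattice_bounded hElat (fun x hx => hRsub (extremePoints_subset hx))
    refine ⟨hEfin.toFinset, ?_, ?_⟩
    · intro x hx; exact hElat x (hEfin.mem_toFinset.mp hx)
    · rw [hEfin.coe_toFinset]
      have h1 := closure_convexHull_extremePoints hcomp hconv
      have h2 : IsClosed (convexHull ℝ (Set.extremePoints ℝ (polarDual P))) :=
        (hEfin.isCompact_convexHull ℝ).isClosed
      rw [h2.closure_eq] at h1
      exact h1.symm
  · intro hdual
    exact reflexive_imp_canonical hPeq h0 hdual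
end
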